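/- For q ≥ 2, let ρ > 0 minimize f(σ) = (∑_{k=0}^{q-1} σ^k)·σ^(-(q-1)/3) and let θ = f(ρ). Define the probability distribution ψ on {0,...,q-1} by ψ_k = ρ^k / (1+ρ+⋯+ρ^(q-1)). Then the Shannon entropy of ψ (with natural logarithm) equals log θ. -/

import Mathlib

set_option maxHeartbeats 1000000 in
/-- For `q ≥ 2`, let `ρ > 0` minimize `f σ = (∑_{k<q} σ^k)·σ^(-(q-1)/3)` and let
`θ = f ρ`. Define `ψ k = ρ^k / (1+ρ+⋯+ρ^(q-1))`. Then the Shannon entropy of `ψ`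
(with natural logarithm) equals `log θ`. -/
theorem stmt_1 (q : ℕ) (hq : 2 ≤ q) (ρ : ℝ) (hρ : 0 < ρ)
    (hmin : ∀ σ : ℝ, 0 < σ →
      (∑ k ∈ Finset.range q, ρ ^ k) * ρ ^ (-((q : ℝ) - 1) / 3) ≤
        (∑ k ∈ Finset.range q, σ ^ k) * σ ^ (-((q : ℝ) - 1) / 3))
    (θ : ℝ) (hθ : θ = (∑ k ∈ Finset.range q, ρ ^ k) * ρ ^ (-((q : ℝ) - 1) / 3))
    (ψ : ℕ → ℝ) (hψ : ∀ k, ψ k = ρ ^ k / ∑ j ∈ Finset.range q, ρ ^ j) :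
    -∑ k ∈ Finset.range q, ψ k * Real.log (ψ k) = Real.log θ := by
  set c : ℝ := -((q : ℝ) - 1) / 3 with hc
  set S : ℝ := ∑ j ∈ Finset.range q, ρ ^ j with hSdef
  have hS : 0 < S :=
    Finset.sum_pos (fun k _ => pow_pos hρ k) ⟨0, Finset.mem_range.mpr (by omega)⟩
  set A : ℝ := ∑ k ∈ Finset.range q, (k : ℝ) * ρ ^ (k - 1) with hA
  have hd1 : HasDerivAt (fun σ : ℝ => ∑ k ∈ Finset.range q, σ ^ k) A ρ :=
    HasDerivAt.fun_sum (fun k _ => hasDerivAt_pow k ρ)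
  have hd2 : HasDerivAt (fun σ : ℝ => σ ^ c) (c * ρ ^ (c - 1)) ρ :=
    Real.hasDerivAt_rpow_const (Or.inl hρ.ne')
  have hd : HasDerivAt (fun σ : ℝ => (∑ k ∈ Finset.range q, σ ^ k) * σ ^ c)
      (A * ρ ^ c + S * (c * ρ ^ (c - 1))) ρ := hd1.mul hd2
  have hmin' : IsLocalMin (fun σ : ℝ => (∑ k ∈ Finset.range q, σ ^ k) * σ ^ c) ρ :=
    Filter.Eventually.mono (eventually_gt_nhds hρ) (fun σ hσ => hmin σ hσ)
  have hderiv0 : A * ρ ^ c + S * (c * ρ ^ (c - 1)) = 0 := hmin'.hasDerivAt_eq_zero hd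
  have hpne : ρ ^ c ≠ 0 := (Real.rpow_pos_of_pos hρ c).ne'
  have h1 : A * ρ + S * c = 0 := by
    rw [Real.rpow_sub_one hρ.ne'] at hderiv0
    have h2 : (A * ρ + S * c) * ρ ^ c = 0 := by
      field_simp at hderiv0 ⊢
      linarith [hderiv0]
    rcases mul_eq_zero.mp h2 with h | h
    · exact h
    · exact absurd h hpne
  have hM : (∑ k ∈ Finset.range q, (k : ℝ) * ρ ^ k) = A * ρ := by
    rw [hA, Finset.sum_mul]
    refine Finset.sum_congr rfl (fun k _ => ?_)
    rcases Nat.eq_zero_or_pos k with h | h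
    · simp [h]
    · rw [mul_assoc, ← pow_succ, Nat.sub_add_cancel h]
  -- entropy computation
  have hterm : ∀ k ∈ Finset.range q,
      ψ k * Real.log (ψ k) = (ρ ^ k / S) * ((k : ℝ) * Real.log ρ - Real.log S) := by
    intro k _
    rw [hψ k]
    congr 1
    rw [Real.log_div (pow_ne_zero k hρ.ne') hS.ne', Real.log_pow]
  rw [Finset.sum_congr rfl hterm, hθ, Real.log_mul hS.ne' hpne, Real.log_rpow hρ]
  have hsum : ∑ k ∈ Finset.range q, (ρ ^ k / S) * ((k : ℝ) * Real.log ρ - Real.log S)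
      = (A * ρ) * Real.log ρ / S - Real.log S := by
    rw [← hM]
    have e1 : ∀ k : ℕ, ρ ^ k / S * ((k : ℝ) * Real.log ρ - Real.log S)
        = ((k : ℝ) * ρ ^ k) * (Real.log ρ / S) - (ρ ^ k / S) * Real.log S := fun k => by
      ring
    simp_rw [e1]
    rw [Finset.sum_sub_distrib, ← Finset.sum_mul, ← Finset.sum_mul, ← Finset.sum_div,
      ← hSdef, div_self hS.ne', one_mul]
    ring
  rw [hsum]
  have hAr : A * ρ = -(S * c) := by linarith
  rw [hAr]
  field_simp
  ring
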